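/- Let X = {0,1}^d and let T be a collection of functions X → X. For i ∈ {1,…,d} let T_i = {x ↦ (t(x))_i : t ∈ T} be the class of Boolean functions given by the i-th output coordinate. If every T_i has VC dimension at most d_i and H ⊆ {-1,1}^X has VC dimension d_0, then for any finite set P ⊆ X of m points, the number of distinct restrictions of H∘T to P is at most (em/d_0)^{d_0} · ∏_{i=1}^d (em/d_i)^{d_i} (with the convention that a factor is 1 when d_i = 0), for m ≥ max_i d_i, m ≥ d_0. -/

import Mathlib

/-- A class `F` of Bool-valued functions shatters a finite set `S` if every
labeling of `S` is realized by some member of `F`. -/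
def Shatters {X : Type*} (F : Set (X → Bool)) (S : Finset X) : Prop :=
  ∀ g : X → Bool, ∃ f ∈ F, ∀ x ∈ S, f x = g x

/-- `VCLE F d` means the VC dimension of `F` is at most `d`. -/
def VCLE {X : Type*} (F : Set (X → Bool)) (d : ℕ) : Prop :=
  ∀ S : Finset X, Shatters F S → S.card ≤ d

lemma binom_bound (m k : ℕ) (hk : k ≤ m) :
    ((∑ j ∈ Finset.Iic k, m.choose j : ℕ) : ℝ) ≤ (Real.exp 1 * m / k) ^ k := by
  rcases Nat.eq_zero_or_pos k with hk0 | hk0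
  · subst hk0; rw [show Finset.Iic 0 = {0} by rfl]; simp
  have hm0 : 0 < m := lt_of_lt_of_le hk0 hk
  have hmR : (0:ℝ) < m := by exact_mod_cast hm0
  have hkR : (0:ℝ) < k := by exact_mod_cast hk0
  set x : ℝ := k / m with hx
  have hx0 : 0 ≤ x := by positivity
  have hx1 : x ≤ 1 := by rw [hx, div_le_one hmR]; exact_mod_cast hk
  have step1 : ((∑ j ∈ Finset.Iic k, m.choose j : ℕ) : ℝ)
      ≤ ((m:ℝ)/k)^k * ∑ j ∈ Finset.Iic k, (m.choose j : ℝ) * x ^ j := by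
    push_cast
    rw [Finset.mul_sum]
    refine Finset.sum_le_sum fun j hj => ?_
    have hjk : j ≤ k := Finset.mem_Iic.mp hj
    have h2 : ((m:ℝ)/k)^j * x^j = 1 := by
      rw [hx, ← mul_pow, div_mul_div_comm, mul_comm (m:ℝ) (k:ℝ), div_self (by positivity), one_pow]
    have h1 : ((m:ℝ)/k)^(k-j) = ((m:ℝ)/k)^k * x^j := by
      rw [← mul_one (((m:ℝ)/k)^(k-j)), ← h2, ← mul_assoc, ← pow_add,
        Nat.sub_add_cancel hjk]
    have key : (1:ℝ) ≤ ((m:ℝ)/k)^k * x ^ j := by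
      rw [← h1]
      apply one_le_pow₀
      rw [le_div_iff₀ hkR]
      simpa using (by exact_mod_cast hk : (k:ℝ) ≤ m)
    calc (m.choose j : ℝ) = 1 * (m.choose j : ℝ) := by ring
      _ ≤ (((m:ℝ)/k)^k * x ^ j) * (m.choose j : ℝ) :=
          mul_le_mul_of_nonneg_right key (by positivity)
      _ = ((m:ℝ)/k)^k * ((m.choose j:ℝ) * x ^ j) := by ring
  have step2 : ∑ j ∈ Finset.Iic k, (m.choose j : ℝ) * x ^ j ≤ (x + 1)^m := by
    have hsub : Finset.Iic k ⊆ Finset.range (m+1) := by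
      intro j hj
      simp only [Finset.mem_Iic] at hj
      exact Finset.mem_range.mpr (Nat.lt_succ_of_le (le_trans hj hk))
    calc ∑ j ∈ Finset.Iic k, (m.choose j : ℝ) * x ^ j
        ≤ ∑ j ∈ Finset.range (m+1), (m.choose j : ℝ) * x ^ j := by
          apply Finset.sum_le_sum_of_subset_of_nonneg hsub
          intro j _ _; positivity
      _ = (x + 1)^m := by
          rw [add_pow]
          exact Finset.sum_congr rfl fun j hj => by ring
  have step3 : (x + 1)^m ≤ (Real.exp 1)^k := by
    calc (x + 1)^m ≤ (Real.exp x)^m := by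
          apply pow_le_pow_left₀ (by positivity)
          linarith [Real.add_one_le_exp x]
      _ = Real.exp (x * m) := by rw [← Real.exp_nat_mul]; ring_nf
      _ = Real.exp k := by
          congr 1
          rw [hx]; field_simp
      _ = (Real.exp 1)^k := by rw [← Real.exp_nat_mul]; ring_nf
  calc ((∑ j ∈ Finset.Iic k, m.choose j : ℕ) : ℝ)
      ≤ ((m:ℝ)/k)^k * ∑ j ∈ Finset.Iic k, (m.choose j : ℝ) * x ^ j := step1
    _ ≤ ((m:ℝ)/k)^k * (Real.exp 1)^k :=
        mul_le_mul_of_nonneg_left (le_trans step2 step3) (by positivity)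
    _ = (Real.exp 1 * m / k) ^ k := by
        rw [← mul_pow]; congr 1; field_simp

lemma sauer_fn {α : Type*} [Fintype α] [DecidableEq α] (F : Set (α → Bool)) (k : ℕ)
    (hF : VCLE F k) : F.ncard ≤ ∑ j ∈ Finset.Iic k, (Fintype.card α).choose j := by
  classical
  have hfin : F.Finite := Set.toFinite F
  set e : (α → Bool) → Finset α := fun g => Finset.univ.filter (fun x => g x = true) with he
  have einj : Function.Injective e := by
    intro g g' h
    funext y
    have h2 := Finset.ext_iff.mp h y
    simp only [he, Finset.mem_filter, Finset.mem_univ, true_and] at h2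
    cases hgy : g y <;> cases hg'y : g' y <;> simp_all
  set 𝒜 : Finset (Finset α) := hfin.toFinset.image e with h𝒜
  have hcard : F.ncard = 𝒜.card := by
    rw [h𝒜, Finset.card_image_of_injective _ einj, Set.ncard_eq_toFinset_card F hfin]
  -- VC dim of the set family is ≤ k
  have hvc : 𝒜.vcDim ≤ k := by
    apply Finset.sup_le
    intro s hs
    have hsh : 𝒜.Shatters s := Finset.mem_shatterer.mp hs
    apply hF
    intro g
    obtain ⟨u, hu, hsu⟩ := hsh (show s.filter (fun y => g y = true) ⊆ s from Finset.filter_subset _ _)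
    rw [h𝒜, Finset.mem_image] at hu
    obtain ⟨f, hfF, hfu⟩ := hu
    refine ⟨f, hfin.mem_toFinset.mp hfF, fun y hy => ?_⟩
    have h3 : y ∈ s ∩ u ↔ y ∈ s.filter (fun y => g y = true) := by rw [hsu]
    simp only [Finset.mem_inter, Finset.mem_filter, ← hfu, he, Finset.mem_filter,
      Finset.mem_univ, true_and] at h3
    cases hgy : g y <;> cases hfy : f y <;> simp_all
  calc F.ncard = 𝒜.card := hcard
    _ ≤ 𝒜.shatterer.card := Finset.card_le_card_shatterer 𝒜
    _ ≤ ∑ j ∈ Finset.Iic 𝒜.vcDim, (Fintype.card α).choose j :=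
        Finset.card_shatterer_le_sum_vcDim
    _ ≤ ∑ j ∈ Finset.Iic k, (Fintype.card α).choose j := by
        apply Finset.sum_le_sum_of_subset (Finset.Iic_subset_Iic.mpr hvc)

lemma precomp_vcle {α X : Type*} [DecidableEq X] (F : Set (X → Bool)) (k : ℕ)
    (hF : VCLE F k) (τ : α → X) : VCLE {g | ∃ f ∈ F, g = f ∘ τ} k := by
  classical
  intro S hS
  have hinj : Set.InjOn τ S := by
    intro a ha b hb hab
    by_contra hne
    obtain ⟨g, ⟨f, hfF, rfl⟩, hg⟩ := hS (fun z => if z = a then true else false)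
    have h1 := hg a ha
    have h2 := hg b hb
    simp only [Function.comp_apply] at h1 h2
    rw [if_pos trivial] at h1
    rw [if_neg (fun h : b = a => hne h.symm), ← hab, h1] at h2
    exact Bool.noConfusion h2
  have himg : Shatters F (S.image τ) := by
    intro g
    obtain ⟨g', ⟨f, hfF, rfl⟩, hg'⟩ := hS (g ∘ τ)
    refine ⟨f, hfF, fun y hy => ?_⟩
    obtain ⟨x, hx, rfl⟩ := Finset.mem_image.mp hy
    exact hg' x hx
  calc S.card = (S.image τ).card := (Finset.card_image_of_injOn hinj).symm
    _ ≤ k := hF _ himg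

lemma vcle_mono {X : Type*} {F G : Set (X → Bool)} {k : ℕ} (h : F ⊆ G) (hG : VCLE G k) :
    VCLE F k := fun S hS => hG S (fun g => by
      obtain ⟨f, hf, ha⟩ := hS g; exact ⟨f, h hf, ha⟩)

/-- Growth bound for compositions on the Boolean hypercube:
the number of restrictions of `H ∘ T` to `m` points is at most
`(em/d₀)^{d₀} · ∏ᵢ (em/dᵢ)^{dᵢ}` (a factor is `1` when the exponent is `0`). -/
theorem hypercube_growth_bound (d : ℕ)
    (H : Set ((Fin d → Bool) → Bool))
    (T : Set ((Fin d → Bool) → (Fin d → Bool)))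
    (d0 : ℕ) (di : Fin d → ℕ)
    (hH : VCLE H d0)
    (hT : ∀ i : Fin d,
      VCLE {g : (Fin d → Bool) → Bool | ∃ t ∈ T, g = fun x => t x i} (di i))
    (P : Finset (Fin d → Bool)) (m : ℕ) (hm : P.card = m)
    (hm0 : d0 ≤ m) (hmi : ∀ i, di i ≤ m) :
    (Set.ncard ((fun f => fun x : (P : Set (Fin d → Bool)) => f (x : Fin d → Bool)) ''
        {f : (Fin d → Bool) → Bool | ∃ h ∈ H, ∃ t ∈ T, f = h ∘ t}) : ℝ)
      ≤ (Real.exp 1 * m / d0) ^ d0 * ∏ i : Fin d, (Real.exp 1 * m / di i) ^ (di i) := by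
  classical
  set α := ↥(P : Set (Fin d → Bool)) with hα
  have hcardα : Fintype.card α = m := by
    rw [← Nat.card_eq_fintype_card, hα, Nat.card_coe_set_eq, Set.ncard_coe_finset, hm]
  set E : Set (α → Bool) :=
    ((fun f => fun x : (P : Set (Fin d → Bool)) => f (x : Fin d → Bool)) ''
        {f : (Fin d → Bool) → Bool | ∃ h ∈ H, ∃ t ∈ T, f = h ∘ t}) with hE
  set R : Set (α → (Fin d → Bool)) := (fun t => fun x : α => t ↑x) '' T with hR
  set Eτ : (α → (Fin d → Bool)) → Set (α → Bool) := fun τ => {g | ∃ h ∈ H, g = h ∘ τ} with hEτ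
  set Ri : Fin d → Set (α → Bool) :=
    fun i => {g | ∃ t ∈ T, g = fun x : α => t ↑x i} with hRi
  set S0 : ℕ := ∑ j ∈ Finset.Iic d0, m.choose j with hS0
  set Si : Fin d → ℕ := fun i => ∑ j ∈ Finset.Iic (di i), m.choose j with hSi
  -- covering
  have hEsub : E ⊆ ⋃ τ ∈ R, Eτ τ := by
    rintro f ⟨f', ⟨h, hh, t, ht, rfl⟩, rfl⟩
    exact Set.mem_biUnion ⟨t, ht, rfl⟩ ⟨h, hh, rfl⟩
  have hEτcard : ∀ τ : α → (Fin d → Bool), (Eτ τ).ncard ≤ S0 := by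
    intro τ
    have := sauer_fn (Eτ τ) d0 (precomp_vcle H d0 hH τ)
    rwa [hcardα] at this
  have hRicard : ∀ i, (Ri i).ncard ≤ Si i := by
    intro i
    have hv : VCLE (Ri i) (di i) := by
      refine vcle_mono ?_
        (precomp_vcle _ (di i) (hT i) (fun x : α => (↑x : Fin d → Bool)))
      rintro g ⟨t, ht, rfl⟩
      exact ⟨fun x => t x i, ⟨t, ht, rfl⟩, rfl⟩
    have := sauer_fn (Ri i) (di i) hv
    rwa [hcardα] at this
  -- finite sets
  have hEfin : E.Finite := Set.toFinite _
  have hRfin : R.Finite := Set.toFinite _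
  have hEτfin : ∀ τ, (Eτ τ).Finite := fun τ => Set.toFinite _
  -- E count
  have hEcard : E.ncard ≤ R.ncard * S0 := by
    have h1 : hEfin.toFinset ⊆ hRfin.toFinset.biUnion (fun τ => (hEτfin τ).toFinset) := by
      intro f hf
      rw [Set.Finite.mem_toFinset] at hf
      obtain ⟨τ, hτ, hfτ⟩ := Set.mem_iUnion₂.mp (hEsub hf)
      exact Finset.mem_biUnion.mpr
        ⟨τ, hRfin.mem_toFinset.mpr hτ, (hEτfin τ).mem_toFinset.mpr hfτ⟩
    calc E.ncard = hEfin.toFinset.card := Set.ncard_eq_toFinset_card _ hEfin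
      _ ≤ (hRfin.toFinset.biUnion (fun τ => (hEτfin τ).toFinset)).card :=
          Finset.card_le_card h1
      _ ≤ ∑ τ ∈ hRfin.toFinset, ((hEτfin τ).toFinset).card := Finset.card_biUnion_le
      _ ≤ ∑ _τ ∈ hRfin.toFinset, S0 := by
          refine Finset.sum_le_sum fun τ _ => ?_
          rw [← Set.ncard_eq_toFinset_card _ (hEτfin τ)]
          exact hEτcard τ
      _ = hRfin.toFinset.card * S0 := by rw [Finset.sum_const, smul_eq_mul]
      _ = R.ncard * S0 := by rw [← Set.ncard_eq_toFinset_card _ hRfin]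
  -- R count
  have hRcard : R.ncard ≤ ∏ i, Si i := by
    have hswinj : Function.Injective (Function.swap : (α → (Fin d → Bool)) → (Fin d → α → Bool)) := by
      intro a b h
      funext x i
      exact congrFun (congrFun h i) x
    have hpi : Function.swap '' R ⊆ Set.univ.pi (fun i => Ri i) := by
      rintro _ ⟨τ, ⟨t, ht, rfl⟩, rfl⟩ i _
      exact ⟨t, ht, rfl⟩
    have hpifin : (Set.univ.pi (fun i => Ri i)).Finite := Set.toFinite _
    have hpicard : (Set.univ.pi (fun i => Ri i)).ncard = ∏ i, (Ri i).ncard := by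
      have heq : hpifin.toFinset
          = Fintype.piFinset (fun i => (Set.toFinite (Ri i)).toFinset) := by
        ext g
        simp [Set.Finite.mem_toFinset, Fintype.mem_piFinset, Set.mem_pi, hRi]
      rw [Set.ncard_eq_toFinset_card _ hpifin, heq, Fintype.card_piFinset]
      exact Finset.prod_congr rfl fun i _ =>
        (Set.ncard_eq_toFinset_card _ (Set.toFinite (Ri i))).symm
    calc R.ncard = (Function.swap '' R).ncard :=
          (Set.ncard_image_of_injective R hswinj).symm
      _ ≤ (Set.univ.pi (fun i => Ri i)).ncard :=
          Set.ncard_le_ncard hpi hpifin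
      _ = ∏ i, (Ri i).ncard := hpicard
      _ ≤ ∏ i, Si i := Finset.prod_le_prod' fun i _ => hRicard i
  -- numeric assembly
  have hB0 : ((S0 : ℕ) : ℝ) ≤ (Real.exp 1 * m / d0) ^ d0 := binom_bound m d0 hm0
  have hBi : ∀ i, ((Si i : ℕ) : ℝ) ≤ (Real.exp 1 * m / di i) ^ (di i) :=
    fun i => binom_bound m (di i) (hmi i)
  have hchain : (E.ncard : ℝ) ≤ (R.ncard : ℝ) * (S0 : ℝ) := by exact_mod_cast hEcard
  have hRreal : (R.ncard : ℝ) ≤ ∏ i, (Real.exp 1 * m / di i) ^ (di i) := by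
    calc (R.ncard : ℝ) ≤ ((∏ i, Si i : ℕ) : ℝ) := by exact_mod_cast hRcard
      _ = ∏ i, ((Si i : ℕ) : ℝ) := by push_cast; ring
      _ ≤ ∏ i, (Real.exp 1 * m / di i) ^ (di i) :=
          Finset.prod_le_prod (fun i _ => by positivity) (fun i _ => hBi i)
  calc (E.ncard : ℝ) ≤ (R.ncard : ℝ) * (S0 : ℝ) := hchain
    _ ≤ (∏ i, (Real.exp 1 * m / di i) ^ (di i)) * ((Real.exp 1 * m / d0) ^ d0) := by
        apply mul_le_mul hRreal hB0 (by positivity)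
        refine Finset.prod_nonneg fun i _ => by positivity
    _ = (Real.exp 1 * m / d0) ^ d0 * ∏ i, (Real.exp 1 * m / di i) ^ (di i) := by ring
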